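/- Let μ be a Borel probability measure on ℝ², let Γ be a grid on ℝ² with C cells, let n ≥ 2, and let D_n be the empirical measure of n iid points drawn from μ. Call a cell of Γ small if its μ-mass is at most 9·log₂(n)/n. Then with probability at least 1 − exp(−3·C·log₂ n), the total D_n-mass of the small cells of Γ is at most 18·C·log₂(n)/n. -/

import Mathlib

open MeasureTheory Finset

noncomputable section

/-- A grid with `r` rows and `c` columns on ℝ², given by `r - 1` strictly increasing
row cut points and `c - 1` strictly increasing column cut points. -/
structure Grid (r c : ℕ) where
  rowCuts : Fin (r - 1) → ℝ
  colCuts : Fin (c - 1) → ℝ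
  rowCuts_mono : StrictMono rowCuts
  colCuts_mono : StrictMono colCuts

/-- Interval number `i` of the partition of ℝ induced by the cut points `cuts`:
`[cuts (i-1), cuts i)`, with the first interval unbounded below and the last
unbounded above. -/
def cutInterval {m : ℕ} (cuts : Fin (m - 1) → ℝ) (i : Fin m) : Set ℝ :=
  {t | (∀ j : Fin (m - 1), (j : ℕ) < (i : ℕ) → cuts j ≤ t) ∧
       (∀ j : Fin (m - 1), (i : ℕ) ≤ (j : ℕ) → t < cuts j)}

/-- Cell `(i, j)` (row `i`, column `j`) of a grid, as a subset of ℝ². -/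
def Grid.cell {r c : ℕ} (G : Grid r c) (i : Fin r) (j : Fin c) : Set (ℝ × ℝ) :=
  {p | p.1 ∈ cutInterval G.colCuts j ∧ p.2 ∈ cutInterval G.rowCuts i}

/-- The probability mass function on `{1,…,r} × {1,…,c}` induced by a measure `ν`
on a grid `G`: it assigns to `(i, j)` the `ν`-measure of cell `(i, j)`. -/
def gridPMF {r c : ℕ} (ν : Measure (ℝ × ℝ)) (G : Grid r c) (i : Fin r) (j : Fin c) : ℝ :=
  (ν (G.cell i j)).toReal

open Classical in
/-- The empirical measure of the sample `ω`, as a real-valued set function. -/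
def empMeas {n : ℕ} (ω : Fin n → ℝ × ℝ) (S : Set (ℝ × ℝ)) : ℝ :=
  ((Finset.univ.filter (fun i => ω i ∈ S)).card : ℝ) / n

/-- The pmf on cells induced by the empirical measure of the sample `ω`. -/
def empGridPMF {n r c : ℕ} (ω : Fin n → ℝ × ℝ) (G : Grid r c) (i : Fin r) (j : Fin c) : ℝ :=
  empMeas ω (G.cell i j)

/-- Mutual information (base 2) of a pmf `p` on `Fin r × Fin c`, with the convention
that terms with `p i j = 0` vanish. -/
def MI {r c : ℕ} (p : Fin r → Fin c → ℝ) : ℝ :=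
  ∑ i, ∑ j, if p i j = 0 then 0
    else p i j * Real.logb 2 (p i j / ((∑ j', p i j') * (∑ i', p i' j)))


lemma measurableSet_cutInterval {m : ℕ} (cuts : Fin (m - 1) → ℝ) (i : Fin m) :
    MeasurableSet (cutInterval cuts i) := by
  have h : cutInterval cuts i =
      (⋂ j : Fin (m - 1), {t : ℝ | (j : ℕ) < (i : ℕ) → cuts j ≤ t}) ∩
      (⋂ j : Fin (m - 1), {t : ℝ | (i : ℕ) ≤ (j : ℕ) → t < cuts j}) := by
    ext t
    simp [cutInterval, Set.mem_iInter]
  rw [h]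
  refine MeasurableSet.inter (MeasurableSet.iInter fun j => ?_) (MeasurableSet.iInter fun j => ?_)
  · by_cases hj : (j : ℕ) < (i : ℕ)
    · simp only [hj, true_implies]; exact measurableSet_Ici
    · simp only [hj, false_implies, Set.setOf_true]; exact MeasurableSet.univ
  · by_cases hj : (i : ℕ) ≤ (j : ℕ)
    · simp only [hj, true_implies]; exact measurableSet_Iio
    · simp only [hj, false_implies, Set.setOf_true]; exact MeasurableSet.univ

lemma measurableSet_cell {r c : ℕ} (G : Grid r c) (i : Fin r) (j : Fin c) :
    MeasurableSet (G.cell i j) := by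
  have h : G.cell i j = (Prod.fst ⁻¹' cutInterval G.colCuts j) ∩
      (Prod.snd ⁻¹' cutInterval G.rowCuts i) := rfl
  rw [h]
  exact ((measurableSet_cutInterval _ _).preimage measurable_fst).inter
    ((measurableSet_cutInterval _ _).preimage measurable_snd)

lemma cutInterval_disj {m : ℕ} (cuts : Fin (m - 1) → ℝ) {i i' : Fin m}
    (h : i ≠ i') {t : ℝ} (h1 : t ∈ cutInterval cuts i) (h2 : t ∈ cutInterval cuts i') :
    False := by
  have hv : (i : ℕ) ≠ (i' : ℕ) := fun hv => h (Fin.ext hv)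
  wlog hlt : (i : ℕ) < (i' : ℕ) generalizing i i'
  · exact this h.symm h2 h1 hv.symm (by omega)
  have hm : (i : ℕ) < m - 1 := by have := i'.isLt; omega
  have ha : cuts ⟨i, hm⟩ ≤ t := h2.1 ⟨i, hm⟩ hlt
  have hb : t < cuts ⟨i, hm⟩ := h1.2 ⟨i, hm⟩ (le_refl _)
  linarith

lemma cell_disj {r c : ℕ} (G : Grid r c) {p q : Fin r × Fin c} (h : p ≠ q)
    {x : ℝ × ℝ} (h1 : x ∈ G.cell p.1 p.2) (h2 : x ∈ G.cell q.1 q.2) : False := by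
  by_cases hij : p.1 = q.1
  · have hjj : p.2 ≠ q.2 := by
      intro hc; exact h (Prod.ext hij hc)
    exact cutInterval_disj G.colCuts hjj h1.1 h2.1
  · exact cutInterval_disj G.rowCuts hij h1.2 h2.2

theorem stmt12 (μ : Measure (ℝ × ℝ)) [IsProbabilityMeasure μ]
    (r c : ℕ) (Γ : Grid r c) (n : ℕ) (hn : 2 ≤ n) :
    ENNReal.ofReal (1 - Real.exp (-(3 * ((r * c : ℕ) : ℝ) * Real.logb 2 n))) ≤
      (Measure.pi fun _ : Fin n => μ)
        {ω | (∑ i, ∑ j,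
            if gridPMF μ Γ i j ≤ 9 * Real.logb 2 n / n then
              empGridPMF ω Γ i j else 0) ≤
          18 * ((r * c : ℕ) : ℝ) * Real.logb 2 n / n} := by
  classical
  letI : MeasureSpace (ℝ × ℝ) := ⟨μ⟩
  have hvolμ : (volume : Measure (ℝ × ℝ)) = μ := rfl
  have hvol : (volume : Measure (Fin n → ℝ × ℝ)) = (Measure.pi fun _ : Fin n => μ) := rfl
  set L := Real.logb 2 (n : ℝ) with hLdef
  have hn0 : (0 : ℝ) < n := by positivity
  have hn2 : (2 : ℝ) ≤ n := by exact_mod_cast hn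
  have hL1 : 1 ≤ L := by
    rw [hLdef]
    calc (1 : ℝ) = Real.logb 2 2 := (Real.logb_self_eq_one (by norm_num)).symm
      _ ≤ Real.logb 2 n := Real.logb_le_logb_of_le (by norm_num) (by norm_num) hn2
  have hL0 : 0 ≤ L := by linarith
  set C : ℝ := ((r * c : ℕ) : ℝ) with hCdef
  have hC0 : 0 ≤ C := Nat.cast_nonneg _
  set Small : Finset (Fin r × Fin c) :=
    Finset.univ.filter (fun p => gridPMF μ Γ p.1 p.2 ≤ 9 * L / n) with hSmalldef
  set S : Set (ℝ × ℝ) := ⋃ p ∈ Small, Γ.cell p.1 p.2 with hSdef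
  have hSmeas : MeasurableSet S :=
    Finset.measurableSet_biUnion _ fun p _ => measurableSet_cell Γ p.1 p.2
  -- the mass of S
  set P : ℝ := (μ S).toReal with hPdef
  have hP0 : 0 ≤ P := ENNReal.toReal_nonneg
  have hPbound : P ≤ C * (9 * L / n) := by
    have h1 : μ S ≤ ∑ p ∈ Small, μ (Γ.cell p.1 p.2) := measure_biUnion_finset_le _ _
    have h2 : P ≤ ∑ p ∈ Small, gridPMF μ Γ p.1 p.2 := by
      have hne : ∀ p ∈ Small, μ (Γ.cell p.1 p.2) ≠ ⊤ := fun p _ => measure_ne_top _ _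
      have := ENNReal.toReal_mono (ENNReal.sum_ne_top.2 hne) h1
      rwa [ENNReal.toReal_sum hne] at this
    have h3 : ∑ p ∈ Small, gridPMF μ Γ p.1 p.2 ≤ Small.card • (9 * L / n) := by
      refine Finset.sum_le_card_nsmul _ _ _ fun p hp => ?_
      exact (Finset.mem_filter.1 hp).2
    have h4 : (Small.card : ℝ) ≤ C := by
      rw [hCdef]
      have := Finset.card_filter_le (Finset.univ : Finset (Fin r × Fin c))
        (fun p => gridPMF μ Γ p.1 p.2 ≤ 9 * L / n)
      have hcu : (Finset.univ : Finset (Fin r × Fin c)).card = r * c := by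
        simp [Fintype.card_prod]
      exact_mod_cast hcu ▸ this
    rw [nsmul_eq_mul] at h3
    have h9 : 0 ≤ 9 * L / n := by positivity
    calc P ≤ (Small.card : ℝ) * (9 * L / n) := le_trans h2 h3
      _ ≤ C * (9 * L / n) := mul_le_mul_of_nonneg_right h4 h9
  -- the weight function
  set g : ℝ × ℝ → ℝ := fun x => if x ∈ S then 2 else 1 with hgdef
  have hgmeas : Measurable g := Measurable.ite hSmeas measurable_const measurable_const
  have hg_eq : g = fun x => S.indicator (fun _ => (1 : ℝ)) x + 1 := by
    funext x; by_cases hx : x ∈ S <;> simp [hgdef, hx] <;> norm_num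
  have hindint : Integrable (fun x => S.indicator (fun _ => (1 : ℝ)) x) μ :=
    (integrable_indicator_iff hSmeas).2 (by
      exact integrableOn_const (measure_ne_top _ _))
  have hgint : Integrable g μ := by
    rw [hg_eq]; exact hindint.add (integrable_const 1)
  have hgintegral : ∫ x, g x ∂μ = 1 + P := by
    rw [hg_eq]
    rw [integral_add hindint (integrable_const 1)]
    rw [integral_indicator_const _ hSmeas, integral_const]
    simp [hPdef]
    linarith [show μ.real S = (μ S).toReal from rfl]
  -- the product function and its integral
  set F : (Fin n → ℝ × ℝ) → ℝ := fun ω => ∏ i, g (ω i) with hFdef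
  have hFmeas : Measurable F :=
    Finset.measurable_prod _ fun i _ => hgmeas.comp (measurable_pi_apply i)
  have hFnonneg : ∀ ω, 0 ≤ F ω := by
    intro ω
    refine Finset.prod_nonneg fun i _ => ?_
    by_cases h : ω i ∈ S <;> simp [hgdef, h]
  have hFintg : Integrable F (Measure.pi fun _ : Fin n => μ) := by
    rw [← hvol]
    exact Integrable.fintype_prod (f := fun _ : Fin n => g) (fun i => hgint)
  have hFint : ∫ ω, F ω ∂(Measure.pi fun _ : Fin n => μ) = (1 + P) ^ n := by
    rw [← hvol, hFdef]
    rw [MeasureTheory.integral_fintype_prod_volume_eq_pow g]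
    have hgi : (∫ x, g x) = 1 + P := hgintegral
    rw [hgi, Fintype.card_fin]
  -- Markov
  set a : ℝ := 18 * C * L with hadef
  have ha0 : 0 ≤ a := by positivity
  set ε : ℝ := Real.exp (Real.log 2 * a) with hεdef
  have hε0 : 0 < ε := Real.exp_pos _
  set Bad : Set (Fin n → ℝ × ℝ) := {ω | ε ≤ F ω} with hBaddef
  have hBadmeas : MeasurableSet Bad := hFmeas measurableSet_Ici
  have markov := mul_meas_ge_le_integral_of_nonneg (μ := Measure.pi fun _ : Fin n => μ)
    (Filter.Eventually.of_forall hFnonneg) hFintg ε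
  rw [hFint] at markov
  have hμBad : (Measure.pi fun _ : Fin n => μ) Bad ≤
      ENNReal.ofReal (Real.exp (-(3 * C * L))) := by
    refine (ENNReal.le_ofReal_iff_toReal_le (measure_ne_top _ _) (Real.exp_nonneg _)).2 ?_
    have h1 : ((Measure.pi fun _ : Fin n => μ) Bad).toReal ≤ (1 + P) ^ n / ε := by
      rw [le_div_iff₀ hε0, mul_comm]
      exact markov
    have h2 : (1 + P) ^ n ≤ Real.exp (9 * C * L) := by
      calc (1 + P) ^ n ≤ (Real.exp P) ^ n := by
            refine pow_le_pow_left₀ (by linarith) ?_ n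
            linarith [Real.add_one_le_exp P]
        _ = Real.exp (n * P) := by rw [← Real.exp_nat_mul]
        _ ≤ Real.exp (9 * C * L) := by
            refine Real.exp_le_exp.2 ?_
            have : (n : ℝ) * P ≤ (n : ℝ) * (C * (9 * L / n)) :=
              mul_le_mul_of_nonneg_left hPbound (by positivity)
            calc (n : ℝ) * P ≤ (n : ℝ) * (C * (9 * L / n)) := this
              _ = 9 * C * L := by field_simp
    have h3 : (1 + P) ^ n / ε ≤ Real.exp (-(3 * C * L)) := by
      rw [div_le_iff₀ hε0, hεdef, ← Real.exp_add]
      refine le_trans h2 (Real.exp_le_exp.2 ?_)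
      have hlog : 0.6931471803 < Real.log 2 := Real.log_two_gt_d9
      have hCL : 0 ≤ C * L := mul_nonneg hC0 hL0
      have hkey : 0.6931471803 * (C * L) ≤ Real.log 2 * (C * L) :=
        mul_le_mul_of_nonneg_right hlog.le hCL
      rw [hadef]
      nlinarith [hkey, hCL]
    exact le_trans h1 h3
  -- the complement of Bad is contained in the event
  have hsubset : Badᶜ ⊆ {ω : Fin n → ℝ × ℝ | (∑ i, ∑ j,
      if gridPMF μ Γ i j ≤ 9 * L / n then empGridPMF ω Γ i j else 0) ≤ 18 * C * L / n} := by
    intro ω hω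
    simp only [hBaddef, Set.mem_compl_iff, Set.mem_setOf_eq, not_le] at hω
    simp only [Set.mem_setOf_eq]
    set cnt : ℕ := (Finset.univ.filter (fun i : Fin n => ω i ∈ S)).card with hcntdef
    have hFω : F ω = 2 ^ cnt := by
      rw [hFdef]
      simp only [hgdef]
      rw [Finset.prod_ite (fun _ => (2:ℝ)) (fun _ => (1:ℝ))]
      rw [Finset.prod_const, Finset.prod_const, one_pow, mul_one]
    have hcnt_lt : (cnt : ℝ) < a := by
      by_contra hge
      push_neg at hge
      have h2c : ε ≤ F ω := by
        rw [hFω, hεdef]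
        calc Real.exp (Real.log 2 * a) ≤ Real.exp (Real.log 2 * cnt) := by
              refine Real.exp_le_exp.2 (mul_le_mul_of_nonneg_left hge ?_)
              exact Real.log_nonneg (by norm_num)
          _ = (2 : ℝ) ^ cnt := by
              rw [mul_comm, Real.exp_nat_mul, Real.exp_log (by norm_num : (0:ℝ) < 2)]
      linarith
    -- rewrite the sum as a sum over Small
    have hEq : (∑ i, ∑ j, if gridPMF μ Γ i j ≤ 9 * L / n then empGridPMF ω Γ i j else 0)
        = ∑ p ∈ Small, empGridPMF ω Γ p.1 p.2 := by
      rw [hSmalldef, Finset.sum_filter, Fintype.sum_prod_type]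
    rw [hEq]
    -- T p : sample points in cell p
    set T : Fin r × Fin c → Finset (Fin n) :=
      fun p => Finset.univ.filter (fun i => ω i ∈ Γ.cell p.1 p.2) with hTdef
    have hTsum : ∑ p ∈ Small, empGridPMF ω Γ p.1 p.2
        = (∑ p ∈ Small, ((T p).card : ℝ)) / n := by
      rw [Finset.sum_div]
      refine Finset.sum_congr rfl fun p hp => ?_
      simp [empGridPMF, empMeas, hTdef]
    have hdisj : ∀ p ∈ Small, ∀ q ∈ Small, p ≠ q → Disjoint (T p) (T q) := by
      intro p _ q _ hpq
      rw [Finset.disjoint_left]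
      intro i hip hiq
      rw [hTdef] at hip hiq
      simp only [Finset.mem_filter] at hip hiq
      exact cell_disj Γ hpq hip.2 hiq.2
    have hkey : ∑ p ∈ Small, (T p).card ≤ cnt := by
      rw [← Finset.card_biUnion hdisj]
      refine Finset.card_le_card ?_
      intro i hi
      rw [Finset.mem_biUnion] at hi
      obtain ⟨p, hp, hip⟩ := hi
      rw [hTdef] at hip
      simp only [Finset.mem_filter] at hip
      simp only [hcntdef, Finset.mem_filter, Finset.mem_univ, true_and]
      exact Set.mem_biUnion hp hip.2
    have hkeyR : (∑ p ∈ Small, ((T p).card : ℝ)) ≤ (cnt : ℝ) := by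
      exact_mod_cast hkey
    rw [hTsum]
    calc (∑ p ∈ Small, ((T p).card : ℝ)) / n ≤ (cnt : ℝ) / n := by gcongr
      _ ≤ a / n := by gcongr
      _ = 18 * C * L / n := by rw [hadef]
  -- put everything together
  calc ENNReal.ofReal (1 - Real.exp (-(3 * C * L)))
      = 1 - ENNReal.ofReal (Real.exp (-(3 * C * L))) := by
        rw [ENNReal.ofReal_sub _ (Real.exp_nonneg _), ENNReal.ofReal_one]
    _ ≤ 1 - (Measure.pi fun _ : Fin n => μ) Bad := tsub_le_tsub_left hμBad 1
    _ = (Measure.pi fun _ : Fin n => μ) Badᶜ := (prob_compl_eq_one_sub hBadmeas).symm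
    _ ≤ _ := measure_mono hsubset


end
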